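/- Response model error for a myopic follower with linear rewards. Let θ*, θ̃ ∈ ℝ^d and suppose B_A > 0 satisfies ‖A_{Q_{θ*}}‖_∞ ≤ B_A and ‖A_{Q_{θ̃}}‖_∞ ≤ B_A. Set f(x) = η·x + C⁽³⁾·x² with C⁽³⁾ = (η²·exp(2ηB_A)/2)·(2 + ηB_A·exp(2ηB_A)). Then for every symmetric positive definite matrix Ψ ∈ ℝ^{d×d}, D_TV(ν_{θ*}, ν_{θ̃}) ≤ min{ f(√(tr(Ψ⁻¹·Σ_{θ̃}))·‖θ* − θ̃‖_Ψ), f(√(tr(Ψ⁻¹·Σ_{θ*}))·‖θ* − θ̃‖_Ψ) }. -/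

import Mathlib

open Finset

noncomputable section

namespace QSE4

variable {B : Type*} [Fintype B]

/-- Soft value `V(Q) = η⁻¹ log Σ_b exp(η Q b)`. -/
def softVal (η : ℝ) (Q : B → ℝ) : ℝ := η⁻¹ * Real.log (∑ b, Real.exp (η * Q b))

/-- Advantage `A_Q(b) = Q b − V(Q)`. -/
def adv (η : ℝ) (Q : B → ℝ) (b : B) : ℝ := Q b - softVal η Q

/-- Quantal response `ν_Q(b) = exp(η A_Q(b))`. -/
def qres (η : ℝ) (Q : B → ℝ) (b : B) : ℝ := Real.exp (η * adv η Q b)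

/-- Total-variation distance between (densities of) distributions on `B`. -/
def dTV (p q : B → ℝ) : ℝ := (1 / 2) * ∑ b, |p b - q b|

/-- Linear reward `Q_θ(b) = ⟨φ(b), θ⟩`. -/
def linQ {d : ℕ} (φ : B → Fin d → ℝ) (θ : Fin d → ℝ) (b : B) : ℝ := ∑ i, φ b i * θ i

/-- Mean feature `μ_θ = E_{ν_θ}[φ]`. -/
def meanFeat (η : ℝ) {d : ℕ} (φ : B → Fin d → ℝ) (θ : Fin d → ℝ) (i : Fin d) : ℝ :=
  ∑ b, qres η (linQ φ θ) b * φ b i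

/-- Covariance matrix `Σ_θ = Σ_b ν_θ(b)(φ(b) − μ_θ)(φ(b) − μ_θ)ᵀ`. -/
def covFeat (η : ℝ) {d : ℕ} (φ : B → Fin d → ℝ) (θ : Fin d → ℝ) :
    Matrix (Fin d) (Fin d) ℝ :=
  Matrix.of fun i j =>
    ∑ b, qres η (linQ φ θ) b *
      ((φ b i - meanFeat η φ θ i) * (φ b j - meanFeat η φ θ j))

/-- Weighted norm `‖v‖_Ψ = √(vᵀ Ψ v)`. -/
def psiNorm {d : ℕ} (Ψ : Matrix (Fin d) (Fin d) ℝ) (v : Fin d → ℝ) : ℝ :=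
  Real.sqrt (∑ i, ∑ j, v i * Ψ i j * v j)


open Matrix

/-! ### Auxiliary analytic lemmas -/

lemma aux_exp_two_sub (y : ℝ) (hy : 0 ≤ y) : Real.exp y * (2 - y) ≤ 4 := by
  rcases le_or_gt y 2 with h2 | h2
  · have hs : 1 - y/3 ≤ Real.exp (-(y/3)) := by
      have := Real.add_one_le_exp (-(y/3)); linarith
    have hs0 : (0:ℝ) ≤ 1 - y/3 := by linarith
    have hcube : (1 - y/3)^3 ≤ Real.exp (-(y/3))^3 := pow_le_pow_left₀ hs0 hs 3
    have hexp : Real.exp (-(y/3))^3 = Real.exp (-y) := by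
      rw [← Real.exp_nat_mul]; ring_nf
    have hpoly : (2 - y)/4 ≤ (1 - y/3)^3 := by nlinarith [sq_nonneg (y - 3/2), sq_nonneg y]
    have h4 : (2 - y)/4 ≤ Real.exp (-y) := by rw [← hexp]; linarith
    have heq : Real.exp y * Real.exp (-y) = 1 := by rw [← Real.exp_add]; simp
    nlinarith [Real.exp_pos y]
  · nlinarith [Real.exp_pos y]

lemma aux_exp_neg_quad (x : ℝ) (hx : x ≤ 0) : Real.exp x ≤ 1 + x + x^2/2 := by
  have H : AntitoneOn (fun t : ℝ => 1 + t + t^2/2 - Real.exp t) (Set.Iic 0) := by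
    apply antitoneOn_of_deriv_nonpos (convex_Iic 0)
    · fun_prop
    · fun_prop
    · intro t ht
      have h1 : HasDerivAt (fun t : ℝ => 1 + t + t^2/2 - Real.exp t)
          (1 + t - Real.exp t) t := by
        have := (((hasDerivAt_id t).const_add 1).add
          (((hasDerivAt_id t).pow 2).div_const 2)).sub (Real.hasDerivAt_exp t)
        refine this.congr_deriv ?_; simp
      rw [h1.deriv]
      have := Real.add_one_le_exp t; linarith
  have h := H (Set.mem_Iic.2 hx) (Set.mem_Iic.2 le_rfl) hx
  simp only [Real.exp_zero] at h; nlinarith [h]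

lemma aux_exp_pos_quad (x : ℝ) (hx : 0 ≤ x) :
    Real.exp x - 1 - x ≤ x^2/2 * Real.exp x := by
  have H : MonotoneOn (fun t : ℝ => t^2/2 * Real.exp t + 1 + t - Real.exp t) (Set.Ici 0) := by
    apply monotoneOn_of_deriv_nonneg (convex_Ici 0)
    · fun_prop
    · fun_prop
    · intro t ht
      have h1 : HasDerivAt (fun t : ℝ => t^2/2 * Real.exp t + 1 + t - Real.exp t)
          (t * Real.exp t + t^2/2 * Real.exp t + 1 - Real.exp t) t := by
        have := (((((hasDerivAt_id t).pow 2).div_const 2).mul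
          (Real.hasDerivAt_exp t)).add_const 1).add (hasDerivAt_id t)
        have h2 := this.sub (Real.hasDerivAt_exp t)
        refine h2.congr_deriv ?_; simp
      rw [h1.deriv]
      rw [interior_Ici] at ht
      have ht0 : (0:ℝ) < t := ht
      have hkey : Real.exp t * (1 - t) ≤ 1 := by
        have h3 : 1 - t ≤ Real.exp (-t) := by have := Real.add_one_le_exp (-t); linarith
        nlinarith [Real.exp_pos t, Real.exp_pos (-t),
          (by rw [← Real.exp_add]; simp : Real.exp t * Real.exp (-t) = 1)]
      nlinarith [Real.exp_pos t, sq_nonneg t]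
  have h := H (Set.mem_Ici.2 le_rfl) (Set.mem_Ici.2 hx) hx
  simp only [Real.exp_zero] at h; nlinarith [h]

/-- `e^x - 1 - x ≤ (x²/2) e^{|x|}` for all real `x`. -/
lemma aux_exp_taylor (x : ℝ) : Real.exp x - 1 - x ≤ x^2/2 * Real.exp |x| := by
  rcases le_or_gt 0 x with hx | hx
  · rw [abs_of_nonneg hx]; exact aux_exp_pos_quad x hx
  · rw [abs_of_neg hx]
    have h1 := aux_exp_neg_quad x hx.le
    have h2 : (1:ℝ) ≤ Real.exp (-x) := Real.one_le_exp (by linarith)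
    nlinarith [sq_nonneg x]

/-- `|e^x - 1| ≤ |x| + (x²/2) e^{|x|}`. -/
lemma aux_abs_exp_sub_one (x : ℝ) : |Real.exp x - 1| ≤ |x| + x^2/2 * Real.exp |x| := by
  rcases le_or_gt 0 x with hx | hx
  · have h := aux_exp_taylor x
    rw [abs_of_nonneg (by nlinarith [Real.add_one_le_exp x] : (0:ℝ) ≤ Real.exp x - 1),
      abs_of_nonneg hx] at *
    linarith
  · rw [abs_of_nonpos (by nlinarith [Real.exp_le_one_iff.2 hx.le] : Real.exp x - 1 ≤ 0),
      abs_of_neg hx]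
    have h1 := Real.add_one_le_exp x
    have h2 : (0:ℝ) ≤ x^2/2 * Real.exp (-x) := by positivity
    linarith

/-! ### Quantal response basics -/

lemma qres_eq [Nonempty B] (η : ℝ) (hη : 0 < η) (Q : B → ℝ) (b : B) :
    qres η Q b = Real.exp (η * Q b) / (∑ b', Real.exp (η * Q b')) := by
  have hS : (0:ℝ) < ∑ b', Real.exp (η * Q b') :=
    Finset.sum_pos (fun b' _ => Real.exp_pos _) Finset.univ_nonempty
  unfold qres adv softVal
  rw [mul_sub, ← mul_assoc, mul_inv_cancel₀ hη.ne', one_mul, Real.exp_sub, Real.exp_log hS]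

lemma sum_qres [Nonempty B] (η : ℝ) (hη : 0 < η) (Q : B → ℝ) :
    ∑ b, qres η Q b = 1 := by
  have hS : (0:ℝ) < ∑ b', Real.exp (η * Q b') :=
    Finset.sum_pos (fun b' _ => Real.exp_pos _) Finset.univ_nonempty
  simp only [qres_eq η hη Q, ← Finset.sum_div]
  exact div_self hS.ne'

/-! ### Cauchy-Schwarz for positive definite quadratic forms -/

lemma quadform_eq {d : ℕ} (M : Matrix (Fin d) (Fin d) ℝ) (a b : Fin d → ℝ) :
    ∑ i, ∑ j, a i * M i j * b j = a ⬝ᵥ (M *ᵥ b) := by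
  simp only [dotProduct, Matrix.mulVec, dotProduct, Finset.mul_sum]
  congr 1; ext i; congr 1; ext j; ring

lemma pd_symm {d : ℕ} (M : Matrix (Fin d) (Fin d) ℝ) (hM : M.IsHermitian) (a b : Fin d → ℝ) :
    a ⬝ᵥ (M *ᵥ b) = b ⬝ᵥ (M *ᵥ a) := by
  rw [dotProduct_mulVec, ← Matrix.mulVec_transpose]
  rw [show Mᵀ = M from by simpa [Matrix.IsHermitian] using hM]
  exact dotProduct_comm _ _

lemma cs_form {d : ℕ} (M : Matrix (Fin d) (Fin d) ℝ) (hM : M.PosDef) (a b : Fin d → ℝ) :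
    (a ⬝ᵥ (M *ᵥ b))^2 ≤ (a ⬝ᵥ (M *ᵥ a)) * (b ⬝ᵥ (M *ᵥ b)) := by
  by_cases hb : b = 0
  · simp [hb]
  · have hbb : 0 < b ⬝ᵥ (M *ᵥ b) := by simpa using hM.dotProduct_mulVec_pos hb
    set t : ℝ := (a ⬝ᵥ (M *ᵥ b)) / (b ⬝ᵥ (M *ᵥ b)) with ht
    have hq : 0 ≤ (a - t • b) ⬝ᵥ (M *ᵥ (a - t • b)) := by
      by_cases hz : a - t • b = 0
      · simp [hz]
      · exact (by simpa using hM.dotProduct_mulVec_pos hz : (0:ℝ) < _).le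
    have hexp : (a - t • b) ⬝ᵥ (M *ᵥ (a - t • b))
        = a ⬝ᵥ (M *ᵥ a) - 2 * t * (a ⬝ᵥ (M *ᵥ b)) + t^2 * (b ⬝ᵥ (M *ᵥ b)) := by
      simp only [Matrix.mulVec_sub, Matrix.mulVec_smul, sub_dotProduct,
        smul_dotProduct, dotProduct_sub, dotProduct_smul,
        smul_eq_mul]
      rw [pd_symm M hM.1 b a]; ring
    rw [hexp] at hq
    have h5 : 2 * t * (a ⬝ᵥ (M *ᵥ b)) - t^2 * (b ⬝ᵥ (M *ᵥ b)) ≤ a ⬝ᵥ (M *ᵥ a) := by linarith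
    have ht2 : 2 * t * (a ⬝ᵥ (M *ᵥ b)) - t^2 * (b ⬝ᵥ (M *ᵥ b))
        = (a ⬝ᵥ (M *ᵥ b))^2 / (b ⬝ᵥ (M *ᵥ b)) := by
      rw [ht]; field_simp; ring
    rw [ht2] at h5
    calc (a ⬝ᵥ (M *ᵥ b))^2 = ((a ⬝ᵥ (M *ᵥ b))^2 / (b ⬝ᵥ (M *ᵥ b))) * (b ⬝ᵥ (M *ᵥ b)) := by
          field_simp
      _ ≤ (a ⬝ᵥ (M *ᵥ a)) * (b ⬝ᵥ (M *ᵥ b)) := mul_le_mul_of_nonneg_right h5 hbb.le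

lemma cs_psi {d : ℕ} (Ψ : Matrix (Fin d) (Fin d) ℝ) (hΨ : Ψ.PosDef) (u v : Fin d → ℝ) :
    (u ⬝ᵥ v)^2 ≤ (u ⬝ᵥ (Ψ⁻¹ *ᵥ u)) * (v ⬝ᵥ (Ψ *ᵥ v)) := by
  have hinv : Ψ * Ψ⁻¹ = 1 := Matrix.mul_nonsing_inv Ψ (isUnit_iff_ne_zero.2 hΨ.det_pos.ne')
  set p : Fin d → ℝ := Ψ⁻¹ *ᵥ u with hp
  have h1 : p ⬝ᵥ (Ψ *ᵥ v) = u ⬝ᵥ v := by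
    rw [pd_symm Ψ hΨ.1 p v, hp, Matrix.mulVec_mulVec, hinv, Matrix.one_mulVec,
      dotProduct_comm]
  have h2 : p ⬝ᵥ (Ψ *ᵥ p) = u ⬝ᵥ (Ψ⁻¹ *ᵥ u) := by
    rw [pd_symm Ψ hΨ.1 p p]
    conv_lhs => rw [hp, Matrix.mulVec_mulVec, hinv, Matrix.one_mulVec]
    rw [dotProduct_comm]
  calc (u ⬝ᵥ v)^2 = (p ⬝ᵥ (Ψ *ᵥ v))^2 := by rw [h1]
    _ ≤ (p ⬝ᵥ (Ψ *ᵥ p)) * (v ⬝ᵥ (Ψ *ᵥ v)) := cs_form Ψ hΨ p v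
    _ = (u ⬝ᵥ (Ψ⁻¹ *ᵥ u)) * (v ⬝ᵥ (Ψ *ᵥ v)) := by rw [h2]

/-! ### Key one-sided bound -/

set_option maxHeartbeats 2000000 in
lemma key_bound {B : Type*} [Fintype B] [Nonempty B]
    (η : ℝ) (hη : 0 < η) {d : ℕ} (φ : B → Fin d → ℝ)
    (θ1 θ2 : Fin d → ℝ) (BA : ℝ) (hBA : 0 < BA)
    (hA1 : ∀ b, |adv η (linQ φ θ1) b| ≤ BA)
    (hA2 : ∀ b, |adv η (linQ φ θ2) b| ≤ BA)
    (Ψ : Matrix (Fin d) (Fin d) ℝ) (hΨ : Ψ.PosDef) :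
    dTV (qres η (linQ φ θ1)) (qres η (linQ φ θ2)) ≤
      η * (Real.sqrt (Matrix.trace (Ψ⁻¹ * covFeat η φ θ2)) * psiNorm Ψ (θ1 - θ2)) +
        (η ^ 2 * Real.exp (2 * η * BA) / 2) * (2 + η * BA * Real.exp (2 * η * BA)) *
          (Real.sqrt (Matrix.trace (Ψ⁻¹ * covFeat η φ θ2)) * psiNorm Ψ (θ1 - θ2)) ^ 2 := by
  -- notation
  set w : B → ℝ := qres η (linQ φ θ2) with hw_def
  set ν : B → ℝ := qres η (linQ φ θ1) with hν_def
  have hw_pos : ∀ b, 0 < w b := fun b => Real.exp_pos _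
  have hw_sum : ∑ b, w b = 1 := sum_qres η hη _
  set Δ : Fin d → ℝ := θ1 - θ2 with hΔ_def
  set u : B → Fin d → ℝ := fun b i => φ b i - meanFeat η φ θ2 i with hu_def
  set δ : B → ℝ := fun b => ∑ i, u b i * Δ i with hδ_def
  set K : ℝ := Real.exp (2 * η * BA) * (2 + η * BA * Real.exp (2 * η * BA)) with hK_def
  -- δ has zero mean under w
  have hδ0 : ∑ b, w b * δ b = 0 := by
    have h1 : ∑ b, w b * δ b = ∑ i, (∑ b, w b * u b i) * Δ i := by
      simp only [hδ_def, Finset.mul_sum]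
      rw [Finset.sum_comm]
      refine Finset.sum_congr rfl fun i _ => ?_
      rw [Finset.sum_mul]
      exact Finset.sum_congr rfl fun b _ => by ring
    rw [h1]
    have h2 : ∀ i, ∑ b, w b * u b i = 0 := by
      intro i
      simp only [hu_def, mul_sub, Finset.sum_sub_distrib, ← Finset.sum_mul, hw_sum,
        one_mul, meanFeat]
      simp [hw_def, sub_self]
    simp [h2]
  -- |δ| ≤ 4 BA
  have hδ_bd : ∀ b, |δ b| ≤ 4 * BA := by
    intro b
    have hδ_adv : ∀ b', δ b' = (adv η (linQ φ θ1) b' - adv η (linQ φ θ2) b')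
        - ∑ b'', w b'' * (adv η (linQ φ θ1) b'' - adv η (linQ φ θ2) b'') := by
      intro b'
      have hlin : ∀ b'', linQ φ θ1 b'' - linQ φ θ2 b'' = ∑ i, φ b'' i * Δ i := by
        intro b''
        simp only [linQ, hΔ_def, ← Finset.sum_sub_distrib, Pi.sub_apply]
        exact Finset.sum_congr rfl fun i _ => by ring
      have hadv : ∀ b'', adv η (linQ φ θ1) b'' - adv η (linQ φ θ2) b''
          = (∑ i, φ b'' i * Δ i) - (softVal η (linQ φ θ1) - softVal η (linQ φ θ2)) := by
        intro b''; rw [← hlin]; simp only [adv]; ring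
      have hm : ∀ b'', δ b'' = (∑ i, φ b'' i * Δ i) - ∑ i, meanFeat η φ θ2 i * Δ i := by
        intro b''
        simp only [hδ_def, hu_def, sub_mul, Finset.sum_sub_distrib]
      rw [hm b']
      simp only [hadv, mul_sub, Finset.sum_sub_distrib, ← Finset.sum_mul, hw_sum, one_mul]
      have : ∑ b'', w b'' * ∑ i, φ b'' i * Δ i = ∑ i, meanFeat η φ θ2 i * Δ i := by
        simp only [Finset.mul_sum, meanFeat]
        rw [Finset.sum_comm]
        refine Finset.sum_congr rfl fun i _ => ?_
        rw [Finset.sum_mul]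
        exact Finset.sum_congr rfl fun b'' _ => by rw [hw_def]; ring
      rw [this]; ring
    rw [hδ_adv b]
    have hD : ∀ b', |adv η (linQ φ θ1) b' - adv η (linQ φ θ2) b'| ≤ 2 * BA := by
      intro b'
      calc |adv η (linQ φ θ1) b' - adv η (linQ φ θ2) b'|
          ≤ |adv η (linQ φ θ1) b'| + |adv η (linQ φ θ2) b'| := abs_sub _ _
        _ ≤ 2 * BA := by have := hA1 b'; have := hA2 b'; linarith
    have hsum : |∑ b'', w b'' * (adv η (linQ φ θ1) b'' - adv η (linQ φ θ2) b'')| ≤ 2 * BA := by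
      calc |∑ b'', w b'' * (adv η (linQ φ θ1) b'' - adv η (linQ φ θ2) b'')|
          ≤ ∑ b'', |w b'' * (adv η (linQ φ θ1) b'' - adv η (linQ φ θ2) b'')| :=
            Finset.abs_sum_le_sum_abs _ _
        _ ≤ ∑ b'', w b'' * (2 * BA) := by
            refine Finset.sum_le_sum fun b'' _ => ?_
            rw [abs_mul, abs_of_pos (hw_pos b'')]
            exact mul_le_mul_of_nonneg_left (hD b'') (hw_pos b'').le
        _ = 2 * BA := by rw [← Finset.sum_mul, hw_sum, one_mul]
    calc |(adv η (linQ φ θ1) b - adv η (linQ φ θ2) b)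
          - ∑ b'', w b'' * (adv η (linQ φ θ1) b'' - adv η (linQ φ θ2) b'')|
        ≤ |adv η (linQ φ θ1) b - adv η (linQ φ θ2) b|
          + |∑ b'', w b'' * (adv η (linQ φ θ1) b'' - adv η (linQ φ θ2) b'')| := abs_sub _ _
      _ ≤ 4 * BA := by have := hD b; linarith
  -- exp(4ηBA) ≤ K and exp(η|δ b|) ≤ K
  have hK : Real.exp (4 * η * BA) ≤ K := by
    have hy : 0 ≤ 2 * η * BA := by positivity
    have h1 := aux_exp_two_sub (2 * η * BA) hy
    have h2 : Real.exp (4 * η * BA) = Real.exp (2 * η * BA) * Real.exp (2 * η * BA) := by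
      rw [← Real.exp_add]; ring_nf
    rw [hK_def, h2]
    nlinarith [Real.exp_pos (2 * η * BA)]
  have hKpos : 0 < K := lt_of_lt_of_le (Real.exp_pos _) hK
  have hexpδ : ∀ b, Real.exp |η * δ b| ≤ K := by
    intro b
    refine le_trans (Real.exp_le_exp.2 ?_) hK
    rw [abs_mul, abs_of_pos hη]
    calc η * |δ b| ≤ η * (4 * BA) := mul_le_mul_of_nonneg_left (hδ_bd b) hη.le
      _ = 4 * η * BA := by ring
  -- Z and the ratio identity
  set Z : ℝ := ∑ b, w b * Real.exp (η * δ b) with hZ_def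
  have hZ_pos : 0 < Z :=
    Finset.sum_pos (fun b _ => mul_pos (hw_pos b) (Real.exp_pos _)) Finset.univ_nonempty
  have hZ_ge : 1 ≤ Z := by
    have h1 : ∀ b, w b * (1 + η * δ b) ≤ w b * Real.exp (η * δ b) := fun b =>
      mul_le_mul_of_nonneg_left (by have := Real.add_one_le_exp (η * δ b); linarith)
        (hw_pos b).le
    have h2 : ∑ b, w b * (1 + η * δ b) = 1 := by
      have : ∑ b, w b * (1 + η * δ b) = (∑ b, w b) + η * ∑ b, w b * δ b := by
        rw [Finset.mul_sum]
        rw [← Finset.sum_add_distrib]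
        exact Finset.sum_congr rfl fun b _ => by ring
      rw [this, hw_sum, hδ0]; ring
    calc (1:ℝ) = ∑ b, w b * (1 + η * δ b) := h2.symm
      _ ≤ Z := Finset.sum_le_sum fun b _ => h1 b
  have hν_eq : ∀ b, ν b = w b * Real.exp (η * δ b) / Z := by
    set m : ℝ := ∑ i, meanFeat η φ θ2 i * Δ i with hm_def
    have hδm : ∀ b, δ b = linQ φ θ1 b - linQ φ θ2 b - m := by
      intro b
      have hlin : linQ φ θ1 b - linQ φ θ2 b = ∑ i, φ b i * Δ i := by
        simp only [linQ, hΔ_def, ← Finset.sum_sub_distrib, Pi.sub_apply]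
        exact Finset.sum_congr rfl fun i _ => by ring
      rw [hlin]
      simp only [hδ_def, hu_def, sub_mul, Finset.sum_sub_distrib, hm_def]
    set S1 : ℝ := ∑ b, Real.exp (η * linQ φ θ1 b) with hS1_def
    set S2 : ℝ := ∑ b, Real.exp (η * linQ φ θ2 b) with hS2_def
    have hS1_pos : 0 < S1 := Finset.sum_pos (fun b _ => Real.exp_pos _) Finset.univ_nonempty
    have hS2_pos : 0 < S2 := Finset.sum_pos (fun b _ => Real.exp_pos _) Finset.univ_nonempty
    have hterm : ∀ b, w b * Real.exp (η * δ b)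
        = Real.exp (η * linQ φ θ1 b) * Real.exp (-(η * m)) / S2 := by
      intro b
      have hnum : Real.exp (η * linQ φ θ1 b) * Real.exp (-(η * m))
          = Real.exp (η * (linQ φ θ1 b - linQ φ θ2 b - m)) * Real.exp (η * linQ φ θ2 b) := by
        rw [← Real.exp_add, ← Real.exp_add]; congr 1; ring
      rw [hw_def, qres_eq η hη, hδm b, ← hS2_def, hnum]
      ring
    have hZ_eq : Z = S1 * Real.exp (-(η * m)) / S2 := by
      rw [hZ_def]
      simp only [hterm]
      rw [← Finset.sum_div, ← Finset.sum_mul, hS1_def]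
    intro b
    rw [hν_def, qres_eq η hη, hterm b, hZ_eq, ← hS1_def]
    rw [div_div_div_eq, div_eq_div_iff (by positivity) (by positivity)]
    ring
  -- pointwise TV decomposition
  have hpoint : ∀ b, |ν b - w b| ≤ w b * |Real.exp (η * δ b) - 1|
      + w b * Real.exp (η * δ b) * (1 - 1/Z) := by
    intro b
    rw [hν_eq b]
    have hd : w b * Real.exp (η * δ b) / Z - w b
        = w b * (Real.exp (η * δ b) - 1) + w b * Real.exp (η * δ b) * (1/Z - 1) := by
      field_simp; ring
    rw [hd]
    have hZ1 : 1/Z ≤ 1 := by rw [div_le_one hZ_pos]; exact hZ_ge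
    have e1 : |w b * (Real.exp (η * δ b) - 1)| = w b * |Real.exp (η * δ b) - 1| := by
      rw [abs_mul, abs_of_pos (hw_pos b)]
    have e2 : |w b * Real.exp (η * δ b) * (1/Z - 1)|
        = w b * Real.exp (η * δ b) * (1 - 1/Z) := by
      rw [abs_mul, abs_of_pos (mul_pos (hw_pos b) (Real.exp_pos _)),
        abs_of_nonpos (by linarith : 1/Z - 1 ≤ 0)]
      ring
    calc |w b * (Real.exp (η * δ b) - 1) + w b * Real.exp (η * δ b) * (1/Z - 1)|
        ≤ |w b * (Real.exp (η * δ b) - 1)| + |w b * Real.exp (η * δ b) * (1/Z - 1)| :=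
          abs_add_le _ _
      _ = w b * |Real.exp (η * δ b) - 1| + w b * Real.exp (η * δ b) * (1 - 1/Z) := by
          rw [e1, e2]
  -- main sum bound
  have hsum_main : ∑ b, |ν b - w b| ≤
      η * ∑ b, w b * |δ b| + η^2 * K * ∑ b, w b * δ b ^ 2 := by
    have h1 : ∑ b, |ν b - w b| ≤
        (∑ b, w b * |Real.exp (η * δ b) - 1|) + (Z - 1) := by
      have hZsplit : ∑ b, w b * Real.exp (η * δ b) * (1 - 1/Z) = Z - 1 := by
        rw [← Finset.sum_mul, ← hZ_def]
        field_simp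
      calc ∑ b, |ν b - w b|
          ≤ ∑ b, (w b * |Real.exp (η * δ b) - 1|
              + w b * Real.exp (η * δ b) * (1 - 1/Z)) :=
            Finset.sum_le_sum fun b _ => hpoint b
        _ = (∑ b, w b * |Real.exp (η * δ b) - 1|)
              + ∑ b, w b * Real.exp (η * δ b) * (1 - 1/Z) := Finset.sum_add_distrib
        _ = _ := by rw [hZsplit]
    have h2 : ∀ b, w b * |Real.exp (η * δ b) - 1|
        ≤ w b * (η * |δ b|) + w b * (η^2 * K / 2 * δ b ^ 2) := by
      intro b
      have ha := aux_abs_exp_sub_one (η * δ b)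
      have hb : (η * δ b)^2/2 * Real.exp |η * δ b| ≤ η^2 * K / 2 * δ b ^ 2 := by
        have h3 : (η * δ b)^2/2 * Real.exp |η * δ b| ≤ (η * δ b)^2/2 * K :=
          mul_le_mul_of_nonneg_left (hexpδ b) (by positivity)
        calc (η * δ b)^2/2 * Real.exp |η * δ b| ≤ (η * δ b)^2/2 * K := h3
          _ = η^2 * K / 2 * δ b ^ 2 := by ring
      have hc : |Real.exp (η * δ b) - 1| ≤ η * |δ b| + η^2 * K / 2 * δ b ^ 2 := by
        have habs : |η * δ b| = η * |δ b| := by rw [abs_mul, abs_of_pos hη]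
        rw [habs] at ha hb
        linarith
      calc w b * |Real.exp (η * δ b) - 1|
          ≤ w b * (η * |δ b| + η^2 * K / 2 * δ b ^ 2) :=
            mul_le_mul_of_nonneg_left hc (hw_pos b).le
        _ = w b * (η * |δ b|) + w b * (η^2 * K / 2 * δ b ^ 2) := by ring
    have h3 : Z - 1 ≤ η^2 * K / 2 * ∑ b, w b * δ b ^ 2 := by
      have hZ1 : Z - 1 = ∑ b, w b * (Real.exp (η * δ b) - 1 - η * δ b) := by
        have : ∑ b, w b * (Real.exp (η * δ b) - 1 - η * δ b)
            = Z - (∑ b, w b) - η * ∑ b, w b * δ b := by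
          rw [hZ_def, Finset.mul_sum, ← Finset.sum_sub_distrib, ← Finset.sum_sub_distrib]
          exact Finset.sum_congr rfl fun b _ => by ring
        rw [this, hw_sum, hδ0]; ring
      rw [hZ1]
      have h4 : ∀ b, w b * (Real.exp (η * δ b) - 1 - η * δ b)
          ≤ w b * (η^2 * K / 2 * δ b ^ 2) := by
        intro b
        refine mul_le_mul_of_nonneg_left ?_ (hw_pos b).le
        have ha := aux_exp_taylor (η * δ b)
        have hb : (η * δ b)^2/2 * Real.exp |η * δ b| ≤ η^2 * K / 2 * δ b ^ 2 := by
          calc (η * δ b)^2/2 * Real.exp |η * δ b| ≤ (η * δ b)^2/2 * K :=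
              mul_le_mul_of_nonneg_left (hexpδ b) (by positivity)
            _ = η^2 * K / 2 * δ b ^ 2 := by ring
        linarith
      calc ∑ b, w b * (Real.exp (η * δ b) - 1 - η * δ b)
          ≤ ∑ b, w b * (η^2 * K / 2 * δ b ^ 2) := Finset.sum_le_sum fun b _ => h4 b
        _ = η^2 * K / 2 * ∑ b, w b * δ b ^ 2 := by
            rw [Finset.mul_sum]; exact Finset.sum_congr rfl fun b _ => by ring
    calc ∑ b, |ν b - w b| ≤ (∑ b, w b * |Real.exp (η * δ b) - 1|) + (Z - 1) := h1
      _ ≤ (∑ b, (w b * (η * |δ b|) + w b * (η^2 * K / 2 * δ b ^ 2)))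
          + η^2 * K / 2 * ∑ b, w b * δ b ^ 2 :=
          add_le_add (Finset.sum_le_sum fun b _ => h2 b) h3
      _ = η * ∑ b, w b * |δ b| + η^2 * K * ∑ b, w b * δ b ^ 2 := by
          rw [Finset.sum_add_distrib]
          have e1 : ∑ b, w b * (η * |δ b|) = η * ∑ b, w b * |δ b| := by
            rw [Finset.mul_sum]; exact Finset.sum_congr rfl fun b _ => by ring
          have e2 : ∑ b, w b * (η^2 * K / 2 * δ b ^ 2)
              = η^2 * K / 2 * ∑ b, w b * δ b ^ 2 := by
            rw [Finset.mul_sum]; exact Finset.sum_congr rfl fun b _ => by ring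
          rw [e1, e2]; ring
  -- trace and quadratic form identities
  set T : ℝ := Matrix.trace (Ψ⁻¹ * covFeat η φ θ2) with hT_def
  set P : ℝ := ∑ i, ∑ j, Δ i * Ψ i j * Δ j with hP_def
  have hP_eq : P = Δ ⬝ᵥ (Ψ *ᵥ Δ) := quadform_eq Ψ Δ Δ
  have hP_nonneg : 0 ≤ P := by
    rw [hP_eq]
    by_cases hΔ0 : Δ = 0
    · simp [hΔ0]
    · exact (by simpa using hΨ.dotProduct_mulVec_pos hΔ0 : (0:ℝ) < _).le
  have hT_eq : T = ∑ b, w b * (u b ⬝ᵥ (Ψ⁻¹ *ᵥ u b)) := by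
    have hcov : ∀ j i, covFeat η φ θ2 j i = ∑ b, w b * (u b j * u b i) := fun j i => rfl
    have htr : T = ∑ i, ∑ j, Ψ⁻¹ i j * covFeat η φ θ2 j i := by
      rw [hT_def]
      simp [Matrix.trace, Matrix.diag, Matrix.mul_apply]
    rw [htr]
    calc ∑ i, ∑ j, Ψ⁻¹ i j * covFeat η φ θ2 j i
        = ∑ i, ∑ j, ∑ b, Ψ⁻¹ i j * (w b * (u b j * u b i)) := by
          refine Finset.sum_congr rfl fun i _ => Finset.sum_congr rfl fun j _ => ?_
          rw [hcov, Finset.mul_sum]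
      _ = ∑ i, ∑ b, ∑ j, Ψ⁻¹ i j * (w b * (u b j * u b i)) :=
          Finset.sum_congr rfl fun i _ => Finset.sum_comm
      _ = ∑ b, ∑ i, ∑ j, Ψ⁻¹ i j * (w b * (u b j * u b i)) := Finset.sum_comm
      _ = ∑ b, w b * (u b ⬝ᵥ (Ψ⁻¹ *ᵥ u b)) := by
          refine Finset.sum_congr rfl fun b _ => ?_
          simp only [dotProduct, Matrix.mulVec, Finset.mul_sum]
          refine Finset.sum_congr rfl fun i _ => Finset.sum_congr rfl fun j _ => ?_
          ring
  have hT_nonneg : 0 ≤ T := by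
    rw [hT_eq]
    refine Finset.sum_nonneg fun b _ => mul_nonneg (hw_pos b).le ?_
    by_cases h0 : u b = 0
    · simp [h0]
    · exact (by simpa using hΨ.inv.dotProduct_mulVec_pos h0 : (0:ℝ) < _).le
  -- second moment bound
  have hsum2 : ∑ b, w b * δ b ^ 2 ≤ T * P := by
    have hδdot : ∀ b, δ b = u b ⬝ᵥ Δ := fun b => rfl
    have h1 : ∀ b, w b * δ b ^ 2 ≤ w b * ((u b ⬝ᵥ (Ψ⁻¹ *ᵥ u b)) * P) := by
      intro b
      refine mul_le_mul_of_nonneg_left ?_ (hw_pos b).le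
      rw [hδdot b, hP_eq]
      exact cs_psi Ψ hΨ (u b) Δ
    calc ∑ b, w b * δ b ^ 2 ≤ ∑ b, w b * ((u b ⬝ᵥ (Ψ⁻¹ *ᵥ u b)) * P) :=
        Finset.sum_le_sum fun b _ => h1 b
      _ = (∑ b, w b * (u b ⬝ᵥ (Ψ⁻¹ *ᵥ u b))) * P := by
          rw [Finset.sum_mul]; exact Finset.sum_congr rfl fun b _ => by ring
      _ = T * P := by rw [← hT_eq]
  -- first moment bound
  have hsum1 : ∑ b, w b * |δ b| ≤ Real.sqrt (T * P) := by
    have hcs := Finset.sum_mul_sq_le_sq_mul_sq Finset.univ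
      (fun b => Real.sqrt (w b)) (fun b => Real.sqrt (w b) * |δ b|)
    have e1 : ∀ b, Real.sqrt (w b) * (Real.sqrt (w b) * |δ b|) = w b * |δ b| := by
      intro b
      rw [← mul_assoc, Real.mul_self_sqrt (hw_pos b).le]
    have e2 : ∀ b, Real.sqrt (w b) ^ 2 = w b := fun b => Real.sq_sqrt (hw_pos b).le
    have e3 : ∀ b, (Real.sqrt (w b) * |δ b|) ^ 2 = w b * δ b ^ 2 := by
      intro b
      rw [mul_pow, Real.sq_sqrt (hw_pos b).le, sq_abs]
    simp only [e1, e2, e3] at hcs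
    rw [hw_sum, one_mul] at hcs
    have h5 : (∑ b, w b * |δ b|) ^ 2 ≤ T * P := le_trans hcs hsum2
    have h6 : 0 ≤ ∑ b, w b * |δ b| :=
      Finset.sum_nonneg fun b _ => mul_nonneg (hw_pos b).le (abs_nonneg _)
    calc ∑ b, w b * |δ b| = Real.sqrt ((∑ b, w b * |δ b|) ^ 2) := (Real.sqrt_sq h6).symm
      _ ≤ Real.sqrt (T * P) := Real.sqrt_le_sqrt h5
  -- put everything together
  have hx_eq : Real.sqrt T * psiNorm Ψ Δ = Real.sqrt (T * P) := by
    rw [psiNorm, ← hP_def, Real.sqrt_mul hT_nonneg]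
  have hx_sq : (Real.sqrt T * psiNorm Ψ Δ) ^ 2 = T * P := by
    rw [hx_eq, Real.sq_sqrt (mul_nonneg hT_nonneg hP_nonneg)]
  have hdtv : dTV ν w = (1/2) * ∑ b, |ν b - w b| := rfl
  rw [hdtv]
  have hfinal : (1/2) * ∑ b, |ν b - w b|
      ≤ (η/2) * Real.sqrt (T * P) + (η^2 * K / 2) * (T * P) := by
    have := hsum_main
    have h7 : η * ∑ b, w b * |δ b| ≤ η * Real.sqrt (T * P) :=
      mul_le_mul_of_nonneg_left hsum1 hη.le
    have h8 : η^2 * K * ∑ b, w b * δ b ^ 2 ≤ η^2 * K * (T * P) :=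
      mul_le_mul_of_nonneg_left hsum2 (by positivity)
    nlinarith
  refine le_trans hfinal ?_
  have hc : (η ^ 2 * Real.exp (2 * η * BA) / 2) * (2 + η * BA * Real.exp (2 * η * BA))
      = η^2 * K / 2 := by rw [hK_def]; ring
  rw [hc, hx_sq, hx_eq]
  have h9 : (η/2) * Real.sqrt (T * P) ≤ η * Real.sqrt (T * P) := by
    nlinarith [Real.sqrt_nonneg (T * P)]
  linarith

lemma dTV_comm (p q : B → ℝ) : dTV p q = dTV q p := by
  unfold dTV
  congr 1
  exact Finset.sum_congr rfl fun b _ => abs_sub_comm _ _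

lemma psiNorm_sub_comm {d : ℕ} (Ψ : Matrix (Fin d) (Fin d) ℝ) (a b : Fin d → ℝ) :
    psiNorm Ψ (a - b) = psiNorm Ψ (b - a) := by
  unfold psiNorm
  congr 1
  refine Finset.sum_congr rfl fun i _ => Finset.sum_congr rfl fun j _ => ?_
  simp only [Pi.sub_apply]
  ring

/-- Response model error for a myopic follower with linear rewards: with
`f(x) = ηx + C⁽³⁾x²`, for every symmetric positive definite `Ψ`,
`D_TV(ν_{θ*}, ν_{θ̃}) ≤ min{f(√tr(Ψ⁻¹Σ_{θ̃})·‖θ*−θ̃‖_Ψ), f(√tr(Ψ⁻¹Σ_{θ*})·‖θ*−θ̃‖_Ψ)}`. -/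
theorem response_model_error_linear
    {B : Type*} [Fintype B] [Nonempty B]
    (η : ℝ) (hη : 0 < η) (d : ℕ) (hd : 1 ≤ d) (φ : B → Fin d → ℝ)
    (θs θt : Fin d → ℝ) (BA : ℝ) (hBA : 0 < BA)
    (hAs : ∀ b, |adv η (linQ φ θs) b| ≤ BA)
    (hAt : ∀ b, |adv η (linQ φ θt) b| ≤ BA)
    (Ψ : Matrix (Fin d) (Fin d) ℝ) (hΨ : Ψ.PosDef) :
    dTV (qres η (linQ φ θs)) (qres η (linQ φ θt)) ≤
      min
        (η * (Real.sqrt (Matrix.trace (Ψ⁻¹ * covFeat η φ θt)) *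
            psiNorm Ψ (θs - θt)) +
          (η ^ 2 * Real.exp (2 * η * BA) / 2) * (2 + η * BA * Real.exp (2 * η * BA)) *
            (Real.sqrt (Matrix.trace (Ψ⁻¹ * covFeat η φ θt)) *
              psiNorm Ψ (θs - θt)) ^ 2)
        (η * (Real.sqrt (Matrix.trace (Ψ⁻¹ * covFeat η φ θs)) *
            psiNorm Ψ (θs - θt)) +
          (η ^ 2 * Real.exp (2 * η * BA) / 2) * (2 + η * BA * Real.exp (2 * η * BA)) *
            (Real.sqrt (Matrix.trace (Ψ⁻¹ * covFeat η φ θs)) *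
              psiNorm Ψ (θs - θt)) ^ 2) := by
  refine le_min ?_ ?_
  · exact key_bound η hη φ θs θt BA hBA hAs hAt Ψ hΨ
  · have h := key_bound η hη φ θt θs BA hBA hAt hAs Ψ hΨ
    rw [dTV_comm, psiNorm_sub_comm] at h
    exact h

end QSE4
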